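/- If n ≥ 3 is odd, then every maximal general position set of the cycle Cₙ has size 3; equivalently, no pair of vertices of Cₙ (n odd, n ≥ 5) forms a maximal general position set. -/

import Mathlib

open SimpleGraph

/-- The interval `I_G[u,v]`: vertices lying on some shortest `u,v`-path. -/
def gpInterval {V : Type*} (G : SimpleGraph V) (u v : V) : Set V :=
  {x | ∃ p : G.Walk u v, p.length = G.dist u v ∧ x ∈ p.support}

/-- A general position set: no three (distinct) vertices of `S` lie on a common
shortest path. -/
def IsGPSet {V : Type*} (G : SimpleGraph V) (S : Set V) : Prop :=
  ∀ u ∈ S, ∀ v ∈ S, ∀ w ∈ S, u ≠ v → v ≠ w → u ≠ w → v ∉ gpInterval G u w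

/-- A maximal general position set. -/
def IsMaximalGPSet {V : Type*} (G : SimpleGraph V) (S : Set V) : Prop :=
  IsGPSet G S ∧ ∀ T : Set V, IsGPSet G T → S ⊆ T → T = S

/-- The general position number of a graph. -/
noncomputable def gpNumber {V : Type*} (G : SimpleGraph V) : ℕ :=
  sSup {n : ℕ | ∃ S : Finset V, IsGPSet G ↑S ∧ S.card = n}

/-- The lexicographic product of two simple graphs. -/
def lexProd {α β : Type*} (G : SimpleGraph α) (H : SimpleGraph β) :
    SimpleGraph (α × β) where
  Adj x y := G.Adj x.1 y.1 ∨ (x.1 = y.1 ∧ H.Adj x.2 y.2)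
  symm := by
    constructor
    intro x y h
    rcases h with h | ⟨h1, h2⟩
    · exact Or.inl h.symm
    · exact Or.inr ⟨h1.symm, h2.symm⟩
  loopless := by
    constructor
    intro x h
    rcases h with h | ⟨_, h2⟩
    · exact G.irrefl h
    · exact H.irrefl h2

/-- val of Fin subtraction, as an omega-friendly disjunction -/
lemma finSubVal {n : ℕ} (a b : Fin n) :
    (a - b).val + b.val = a.val ∨ (a - b).val + b.val = a.val + n := by
  have hb : b.val < n := b.isLt
  have ha : a.val < n := a.isLt
  rw [Fin.sub_def]
  simp only
  rcases Nat.lt_or_ge (n - b.val + a.val) n with h | h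
  · rw [Nat.mod_eq_of_lt h]; omega
  · rw [Nat.mod_eq_sub_mod h, Nat.mod_eq_of_lt (by omega)]; omega

lemma finAddVal {n : ℕ} (a b : Fin n) :
    (a + b).val = a.val + b.val ∨ (a + b).val + n = a.val + b.val := by
  have hb : b.val < n := b.isLt
  have ha : a.val < n := a.isLt
  rw [Fin.add_def]
  simp only
  rcases Nat.lt_or_ge (a.val + b.val) n with h | h
  · rw [Nat.mod_eq_of_lt h]; omega
  · rw [Nat.mod_eq_sub_mod h, Nat.mod_eq_of_lt (by omega)]; omega

/-- lower bound for walk length in a cycle -/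
lemma cycWalkLower {n : ℕ} {u v : Fin n} (p : (cycleGraph n).Walk u v) :
    min (v - u).val (u - v).val ≤ p.length := by
  induction p with
  | nil =>
      rename_i x
      have h1 := finSubVal x x
      have h2 := (x - x).isLt
      simp only [Walk.length_nil]
      rcases h1 with h1 | h1 <;> omega
  | @cons u w v hadj p ih =>
      rw [cycleGraph_adj'] at hadj
      have h1 := finSubVal v u
      have h2 := finSubVal u v
      have h3 := finSubVal v w
      have h4 := finSubVal w v
      have b1 := (v - u).isLt
      have b2 := (u - v).isLt
      have b3 := (v - w).isLt
      have b4 := (w - v).isLt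
      have h5 := finSubVal u w
      have h6 := finSubVal w u
      have b5 := (u - w).isLt
      have b6 := (w - u).isLt
      simp only [Walk.length_cons]
      rcases h1 with h1 | h1 <;> rcases h2 with h2 | h2 <;> rcases h3 with h3 | h3 <;>
        rcases h4 with h4 | h4 <;> rcases h5 with h5 | h5 <;> rcases h6 with h6 | h6 <;>
        rcases hadj with hadj | hadj <;> omega

/-- existence of a walk of length `(v - u).val` -/
lemma cycWalkUpper {n : ℕ} (hn : 2 ≤ n) :
    ∀ (k : ℕ) (u v : Fin n), (v - u).val = k →
      ∃ p : (cycleGraph n).Walk u v, p.length = k := by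
  intro k
  induction k with
  | zero =>
      intro u v h
      have h1 := finSubVal v u
      have hb := u.isLt
      have : u = v := by
        apply Fin.ext
        rcases h1 with h1 | h1 <;> omega
      subst this
      exact ⟨Walk.nil, rfl⟩
  | succ k ih =>
      intro u v h
      haveI : NeZero n := ⟨by omega⟩
      set w : Fin n := u + 1 with hw
      have h1one : (1 : Fin n).val = 1 := by
        rw [Fin.val_one']
        exact Nat.mod_eq_of_lt (by omega)
      have haddw := finAddVal u 1
      rw [h1one] at haddw
      rw [← hw] at haddw
      clear_value w
      have hbu := u.isLt
      have hbw := w.isLt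
      have hadj : (cycleGraph n).Adj u w := by
        rw [cycleGraph_adj']
        have := finSubVal w u
        have h6 := (w - u).isLt
        have h5 := this
        right
        rcases h5 with h5 | h5 <;> rcases haddw with h7 | h7 <;> omega
      have hvw : (v - w).val = k := by
        have h2 := finSubVal v w
        have h3 := finSubVal v u
        have hbv := v.isLt
        have hbvw := (v - w).isLt
        have hbvu := (v - u).isLt
        rcases h2 with h2 | h2 <;> rcases h3 with h3 | h3 <;>
          rcases haddw with h7 | h7 <;> omega
      obtain ⟨p, hp⟩ := ih w v hvw
      exact ⟨Walk.cons hadj p, by simp [hp]⟩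

lemma cycDist {n : ℕ} (hn : 2 ≤ n) (u v : Fin n) :
    (cycleGraph n).dist u v = min (v - u).val (u - v).val := by
  have hconn : (cycleGraph n).Connected := by
    obtain ⟨k, rfl⟩ : ∃ k, n = k + 1 := ⟨n - 1, by omega⟩
    exact cycleGraph_connected
  apply le_antisymm
  · apply le_min
    · obtain ⟨p, hp⟩ := cycWalkUpper hn (v - u).val u v rfl
      exact hp ▸ dist_le p
    · obtain ⟨p, hp⟩ := cycWalkUpper hn (u - v).val v u rfl
      calc (cycleGraph n).dist u v ≤ p.reverse.length := dist_le p.reverse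
        _ = (u - v).val := by rw [Walk.length_reverse, hp]
  · obtain ⟨p, hp⟩ := hconn.exists_walk_length_eq_dist u v
    exact hp ▸ cycWalkLower p

/-- interval membership characterization -/
lemma mem_gpInterval_iff {V : Type*} {G : SimpleGraph V} (hconn : G.Connected)
    (u v w : V) : v ∈ gpInterval G u w ↔ G.dist u v + G.dist v w = G.dist u w := by
  classical
  constructor
  · rintro ⟨p, hlen, hsup⟩
    have hspec := p.take_spec hsup
    have hlen2 : (p.takeUntil v hsup).length + (p.dropUntil v hsup).length = p.length := by
      rw [← Walk.length_append, hspec]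
    have h1 : G.dist u v ≤ (p.takeUntil v hsup).length := dist_le _
    have h2 : G.dist v w ≤ (p.dropUntil v hsup).length := dist_le _
    have h3 := hconn.dist_triangle (u := u) (v := v) (w := w)
    omega
  · intro h
    obtain ⟨p, hp⟩ := hconn.exists_walk_length_eq_dist u v
    obtain ⟨q, hq⟩ := hconn.exists_walk_length_eq_dist v w
    refine ⟨p.append q, by rw [Walk.length_append, hp, hq, h], ?_⟩
    rw [Walk.mem_support_append_iff]
    exact Or.inl (Walk.end_mem_support p)


lemma gp_small {V : Type*} {G : SimpleGraph V} (T : Set V) (a b : V) (hT : T ⊆ {a, b}) :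
    IsGPSet G T := by
  intro u hu v hv w hw huv hvw huw _
  have hu' := hT hu
  have hv' := hT hv
  have hw' := hT hw
  simp only [Set.mem_insert_iff, Set.mem_singleton_iff] at hu' hv' hw'
  rcases hu' with rfl | rfl <;> rcases hv' with rfl | rfl <;> rcases hw' with rfl | rfl <;>
    first
      | exact huv rfl
      | exact hvw rfl
      | exact huw rfl

lemma gp_triple {V : Type*} {G : SimpleGraph V} (hconn : G.Connected) (a b c : V)
    (h1 : G.dist a b + G.dist b c ≠ G.dist a c)
    (h2 : G.dist b a + G.dist a c ≠ G.dist b c)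
    (h3 : G.dist a c + G.dist c b ≠ G.dist a b) :
    IsGPSet G {a, b, c} := by
  have c1 : G.dist a b = G.dist b a := SimpleGraph.dist_comm
  have c2 : G.dist b c = G.dist c b := SimpleGraph.dist_comm
  have c3 : G.dist a c = G.dist c a := SimpleGraph.dist_comm
  intro u hu v hv w hw huv hvw huw hmem
  rw [mem_gpInterval_iff hconn] at hmem
  simp only [Set.mem_insert_iff, Set.mem_singleton_iff] at hu hv hw
  rcases hu with rfl | rfl | rfl <;> rcases hv with rfl | rfl | rfl <;>
    rcases hw with rfl | rfl | rfl <;>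
    first
      | exact huv rfl
      | exact hvw rfl
      | exact huw rfl
      | omega

lemma mid_mem {n m : ℕ} (hm : n = 2 * m + 1) (hm1 : 1 ≤ m) (u v w : Fin n)
    (h : (v - u).val + (w - v).val ≤ m) (h1 : 1 ≤ (v - u).val) (h2 : 1 ≤ (w - v).val) :
    v ∈ gpInterval (cycleGraph n) u w := by
  have hn2 : 2 ≤ n := by omega
  haveI : NeZero n := ⟨by omega⟩
  have hconn : (cycleGraph n).Connected := by
    obtain ⟨k, rfl⟩ : ∃ k, n = k + 1 := ⟨n - 1, by omega⟩
    exact cycleGraph_connected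
  rw [mem_gpInterval_iff hconn]
  simp only [cycDist hn2]
  have s1 := finSubVal v u
  have s2 := finSubVal u v
  have s3 := finSubVal w v
  have s4 := finSubVal v w
  have t1 := (v - u).isLt
  have t2 := (u - v).isLt
  have t3 := (w - v).isLt
  have t4 := (v - w).isLt
  have t5 := u.isLt
  have t6 := v.isLt
  have t7 := w.isLt
  have e2 : (u - v).val = n - (v - u).val := by
    rcases s1 with s1 | s1 <;> rcases s2 with s2 | s2 <;> omega
  have e4 : (v - w).val = n - (w - v).val := by
    rcases s3 with s3 | s3 <;> rcases s4 with s4 | s4 <;> omega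
  have hwueq : w - u = (w - v) + (v - u) := by abel
  have s5 := finAddVal (w - v) (v - u)
  rw [← hwueq] at s5
  have t8 := (w - u).isLt
  have e5 : (w - u).val = (w - v).val + (v - u).val := by
    rcases s5 with s5 | s5 <;> omega
  have s6 := finSubVal u w
  have s7 := finSubVal w u
  have t9 := (u - w).isLt
  have e6 : (u - w).val = n - (w - u).val := by
    rcases s6 with s6 | s6 <;> rcases s7 with s7 | s7 <;> omega
  omega

lemma key2 {n m : ℕ} (hm : n = 2 * m + 1) (hm1 : 1 ≤ m) (a b : Fin n) (hab : a ≠ b)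
    (hkm : (b - a).val ≤ m) :
    ∃ c : Fin n, c ≠ a ∧ c ≠ b ∧ IsGPSet (cycleGraph n) {a, b, c} := by
  have hn2 : 2 ≤ n := by omega
  haveI : NeZero n := ⟨by omega⟩
  have hconn : (cycleGraph n).Connected := by
    obtain ⟨k, rfl⟩ : ∃ k, n = k + 1 := ⟨n - 1, by omega⟩
    exact cycleGraph_connected
  obtain ⟨k, hk⟩ : ∃ k, (b - a).val = k := ⟨_, rfl⟩
  rw [hk] at hkm
  have hba := finSubVal b a
  have hab2 := finSubVal a b
  have hbnda := (b - a).isLt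
  have hbndab := (a - b).isLt
  have hbnda2 := a.isLt
  have hbndb2 := b.isLt
  have havbv : a.val ≠ b.val := fun h => hab (Fin.ext h)
  have hk1 : 1 ≤ k := by rcases hba with h' | h' <;> omega
  have hab' : (a - b).val = n - k := by
    rcases hba with h' | h' <;> rcases hab2 with h'' | h'' <;> omega
  obtain ⟨mfin, hmfin⟩ : ∃ x : Fin n, x = ⟨m, by omega⟩ := ⟨_, rfl⟩
  have hmv : mfin.val = m := by rw [hmfin]
  obtain ⟨c, hcdef⟩ : ∃ c : Fin n, c = b + mfin := ⟨_, rfl⟩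
  have hcbv : (c - b).val = m := by
    rw [hcdef, add_sub_cancel_left, hmv]
  have hcaeq : c - a = (b - a) + mfin := by rw [hcdef]; abel
  have hcaval := finAddVal (b - a) mfin
  rw [← hcaeq, hmv, hk] at hcaval
  have hbndca := (c - a).isLt
  have hcav : (c - a).val = k + m := by
    rcases hcaval with h' | h' <;> omega
  have hcv := finAddVal b mfin
  rw [← hcdef, hmv] at hcv
  have hbndc := c.isLt
  have hbcv : (b - c).val = m + 1 := by
    have h' := finSubVal b c
    have hb' := (b - c).isLt
    rcases h' with h' | h' <;> rcases hcv with h'' | h'' <;> omega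
  have hacv : (a - c).val = m + 1 - k := by
    have h' := finSubVal a c
    have h'' := finSubVal c a
    have hb' := (a - c).isLt
    rcases h' with h' | h' <;> rcases h'' with h'' | h'' <;> omega
  have hcvala : c.val ≠ a.val := by
    have h'' := finSubVal c a
    rcases h'' with h'' | h'' <;> omega
  have hcvalb : c.val ≠ b.val := by
    rcases hcv with h'' | h'' <;> omega
  have dab : (cycleGraph n).dist a b = k := by
    rw [cycDist hn2, hk, hab']; omega
  have dbc : (cycleGraph n).dist b c = m := by
    rw [cycDist hn2, hcbv, hbcv]; omega
  have dac : (cycleGraph n).dist a c = m + 1 - k := by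
    rw [cycDist hn2, hcav, hacv]; omega
  have dba : (cycleGraph n).dist b a = k := by
    rw [SimpleGraph.dist_comm]; exact dab
  have dcb : (cycleGraph n).dist c b = m := by
    rw [SimpleGraph.dist_comm]; exact dbc
  refine ⟨c, fun h => hcvala (congrArg Fin.val h), fun h => hcvalb (congrArg Fin.val h), ?_⟩
  exact gp_triple hconn a b c (by omega) (by omega) (by omega)

/-- for odd `n ≥ 3`, every maximal general position set of the
cycle `Cₙ` has size 3. -/
theorem stmt19 (n : ℕ) (hn : 3 ≤ n) (hodd : Odd n) (S : Finset (Fin n))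
    (hS : IsMaximalGPSet (cycleGraph n) ↑S) :
    S.card = 3 := by
  obtain ⟨m, hm⟩ := hodd
  have hm1 : 1 ≤ m := by omega
  have hn2 : 2 ≤ n := by omega
  haveI : NeZero n := ⟨by omega⟩
  have h1one : (1 : Fin n).val = 1 := by
    rw [Fin.val_one']
    exact Nat.mod_eq_of_lt (by omega)
  by_contra hcard
  rcases Nat.lt_or_ge S.card 3 with hlt | hge
  · -- small cases
    rcases Nat.lt_or_ge S.card 2 with h1 | h2
    · rcases Nat.lt_or_ge S.card 1 with h0 | h1'
      · -- card 0
        have hs0 : S = ∅ := Finset.card_eq_zero.mp (show S.card = 0 by omega)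
        have hgp : IsGPSet (cycleGraph n) {(0 : Fin n)} :=
          gp_small _ (0 : Fin n) (0 : Fin n) (by simp)
        have hTeq := hS.2 {(0 : Fin n)} hgp (by simp [hs0])
        have h0mem : (0 : Fin n) ∈ (↑S : Set (Fin n)) := by
          rw [← hTeq]; exact rfl
        rw [hs0] at h0mem; simp at h0mem
      · -- card 1
        obtain ⟨y, hy⟩ := Finset.card_eq_one.mp (show S.card = 1 by omega)
        obtain ⟨x, hx⟩ : ∃ x : Fin n, x = y + 1 := ⟨_, rfl⟩
        have haddv := finAddVal y 1
        rw [h1one, ← hx] at haddv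
        have hbx := x.isLt
        have hby := y.isLt
        have hxy : x ≠ y := by
          intro h
          have := congrArg Fin.val h
          rcases haddv with h' | h' <;> omega
        have hgp : IsGPSet (cycleGraph n) {x, y} := gp_small _ x y (le_refl _)
        have hTeq := hS.2 {x, y} hgp (by rw [hy]; simp)
        have hxmem : x ∈ (↑S : Set (Fin n)) := by
          rw [← hTeq]; exact Set.mem_insert _ _
        rw [hy] at hxmem; simp at hxmem
        exact hxy hxmem
    · -- card 2
      obtain ⟨a0, b0, hne0, hs0⟩ :=
        Finset.card_eq_two.mp (le_antisymm (show S.card ≤ 2 by omega) h2)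
      have key : ∀ a b : Fin n, a ≠ b → S = {a, b} → (b - a).val ≤ m → False := by
        intro a b hab hs hkm
        obtain ⟨c, hcnea, hcneb, hgp⟩ := key2 hm hm1 a b hab hkm
        have hTeq := hS.2 {a, b, c} hgp (by
          rw [hs]
          intro x hx
          simp only [Finset.coe_insert, Finset.coe_singleton, Set.mem_insert_iff,
            Set.mem_singleton_iff] at hx ⊢
          tauto)
        have hcmem : c ∈ (↑S : Set (Fin n)) := by
          rw [← hTeq]; simp
        rw [hs] at hcmem
        simp only [Finset.coe_insert, Finset.coe_singleton, Set.mem_insert_iff,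
          Set.mem_singleton_iff] at hcmem
        rcases hcmem with h' | h'
        · exact hcnea h'
        · exact hcneb h'
      rcases le_or_gt (b0 - a0).val m with h' | h'
      · exact key a0 b0 hne0 hs0 h'
      · refine key b0 a0 hne0.symm (by rw [hs0]; exact Finset.pair_comm a0 b0) ?_
        have h1 := finSubVal b0 a0
        have h2' := finSubVal a0 b0
        have hb1 := (b0 - a0).isLt
        have hb2 := (a0 - b0).isLt
        have hb3 := a0.isLt
        have hb4 := b0.isLt
        have havbv : a0.val ≠ b0.val := fun h => hne0 (Fin.ext h)
        rcases h1 with h1 | h1 <;> rcases h2' with h2' | h2' <;> omega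
  · -- card ≥ 4
    obtain ⟨a, b, c, d, t, hL⟩ : ∃ a b c d t, S.sort (· ≤ ·) = a :: b :: c :: d :: t := by
      have hlen : (S.sort (· ≤ ·)).length = S.card := Finset.length_sort _
      rcases h : S.sort (· ≤ ·) with _ | ⟨a, _ | ⟨b, _ | ⟨c, _ | ⟨d, t⟩⟩⟩⟩ <;>
        rw [h] at hlen <;>
        simp only [List.length_cons, List.length_nil] at hlen <;>
        try omega
      exact ⟨a, b, c, d, t, rfl⟩
    have haS : a ∈ S := by rw [← Finset.mem_sort (· ≤ ·), hL]; simp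
    have hbS : b ∈ S := by rw [← Finset.mem_sort (· ≤ ·), hL]; simp
    have hcS : c ∈ S := by rw [← Finset.mem_sort (· ≤ ·), hL]; simp
    have hdS : d ∈ S := by rw [← Finset.mem_sort (· ≤ ·), hL]; simp
    have hsorted := (Finset.sortedLT_sort S).pairwise
    rw [hL] at hsorted
    have h1 := List.pairwise_cons.mp hsorted
    have h2 := List.pairwise_cons.mp h1.2
    have h3 := List.pairwise_cons.mp h2.2
    have hab : a < b := h1.1 b (by simp)
    have hac : a < c := h1.1 c (by simp)
    have had : a < d := h1.1 d (by simp)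
    have hbc : b < c := h2.1 c (by simp)
    have hbd : b < d := h2.1 d (by simp)
    have hcd : c < d := h3.1 d (by simp)
    rw [Fin.lt_def] at hab hac had hbc hbd hcd
    have hba := a.isLt
    have hbb := b.isLt
    have hbcc := c.isLt
    have hbdd := d.isLt
    have s1 := finSubVal b a
    have s3 := finSubVal c b
    have s5 := finSubVal d c
    have s7 := finSubVal a d
    have t1 := (b - a).isLt
    have t3 := (c - b).isLt
    have t5 := (d - c).isLt
    have t7 := (a - d).isLt
    have e1 : (b - a).val = b.val - a.val := by rcases s1 with s1 | s1 <;> omega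
    have e3 : (c - b).val = c.val - b.val := by rcases s3 with s3 | s3 <;> omega
    have e5 : (d - c).val = d.val - c.val := by rcases s5 with s5 | s5 <;> omega
    have e7 : (a - d).val = a.val + n - d.val := by rcases s7 with s7 | s7 <;> omega
    by_cases hsp : c.val ≤ a.val + m
    · have hmem : b ∈ gpInterval (cycleGraph n) a c :=
        mid_mem hm hm1 a b c (by omega) (by omega) (by omega)
      exact hS.1 a (Finset.mem_coe.mpr haS) b (Finset.mem_coe.mpr hbS) c
        (Finset.mem_coe.mpr hcS) (Fin.ne_of_lt (Fin.lt_def.mpr hab))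
        (Fin.ne_of_lt (Fin.lt_def.mpr hbc)) (Fin.ne_of_lt (Fin.lt_def.mpr hac)) hmem
    · have hmem : d ∈ gpInterval (cycleGraph n) c a :=
        mid_mem hm hm1 c d a (by omega) (by omega) (by omega)
      exact hS.1 c (Finset.mem_coe.mpr hcS) d (Finset.mem_coe.mpr hdS) a
        (Finset.mem_coe.mpr haS) (Fin.ne_of_lt (Fin.lt_def.mpr hcd))
        (Fin.ne_of_gt (Fin.lt_def.mpr had)) (Fin.ne_of_gt (Fin.lt_def.mpr hac)) hmem
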